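/- For real variables x_1,...,x_m, P_{m+2}(x_1,...,x_m) = (−1)^{m+1} (m+2)!/2 · (∏_{j=1}^m x_j) · (3E_1² + E_2)/12, where E_k = Σ_j x_j^k. -/

import Mathlib

noncomputable def P (m n : ℕ) (x : Fin m → ℝ) : ℝ :=
  ∑ S ∈ (Finset.univ : Finset (Fin m)).powerset.filter Finset.Nonempty,
    (-1 : ℝ) ^ (S.card + 1) * (∑ j ∈ S, x j) ^ n

open Finset

noncomputable def Q {ι : Type*} [DecidableEq ι] (n : ℕ) (s : Finset ι) (x : ι → ℝ) : ℝ :=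
  ∑ S ∈ s.powerset, (-1 : ℝ) ^ S.card * (∑ j ∈ S, x j) ^ n

lemma Q_insert {ι : Type*} [DecidableEq ι] {a : ι} {s : Finset ι} (ha : a ∉ s)
    (n : ℕ) (x : ι → ℝ) :
    Q n (insert a s) x =
      - ∑ k ∈ Finset.range n, (n.choose k : ℝ) * x a ^ (n - k) * Q k s x := by
  have h1 : Q n (insert a s) x = Q n s x
      - ∑ T ∈ s.powerset, (-1 : ℝ) ^ T.card * (x a + ∑ j ∈ T, x j) ^ n := by
    rw [Q, Finset.sum_powerset_insert ha]
    have : ∀ T ∈ s.powerset,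
        (-1 : ℝ) ^ (insert a T).card * (∑ j ∈ insert a T, x j) ^ n
          = -((-1 : ℝ) ^ T.card * (x a + ∑ j ∈ T, x j) ^ n) := by
      intro T hT
      have haT : a ∉ T := fun h => ha (Finset.mem_powerset.1 hT h)
      rw [Finset.card_insert_of_notMem haT, Finset.sum_insert haT, pow_succ]
      ring
    rw [Finset.sum_congr rfl this, Finset.sum_neg_distrib]
    rfl
  have h2 : ∀ T : Finset ι, (x a + ∑ j ∈ T, x j) ^ n
      = ∑ k ∈ Finset.range (n+1), (n.choose k : ℝ) * x a ^ (n - k) * (∑ j ∈ T, x j) ^ k := by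
    intro T
    rw [add_comm, add_pow]
    exact Finset.sum_congr rfl fun k _ => by ring
  have h3 : ∑ T ∈ s.powerset, (-1 : ℝ) ^ T.card * (x a + ∑ j ∈ T, x j) ^ n
      = ∑ k ∈ Finset.range (n+1), (n.choose k : ℝ) * x a ^ (n - k) * Q k s x := by
    simp_rw [h2, Finset.mul_sum, Q]
    rw [Finset.sum_comm]
    refine Finset.sum_congr rfl fun k _ => ?_
    rw [Finset.mul_sum]
    exact Finset.sum_congr rfl fun T _ => by ring
  rw [h1, h3, Finset.sum_range_succ]
  simp [Nat.choose_self]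

lemma choose_casts (c : ℕ) :
    (((c+2).choose c : ℝ) = (c+2)*(c+1)/2) ∧
    (((c+3).choose c : ℝ) = (c+3)*(c+2)*(c+1)/6) ∧
    (((c+3).choose (c+1) : ℝ) = (c+3)*(c+2)/2) := by
  have hc : (c.factorial : ℝ) ≠ 0 := Nat.cast_ne_zero.2 c.factorial_ne_zero
  have e2 : c + 2 - c = 2 := by omega
  have e3 : c + 3 - c = 3 := by omega
  have e3b : c + 3 - (c + 1) = 2 := by omega
  refine ⟨?_, ?_, ?_⟩
  · rw [Nat.cast_choose ℝ (by omega), e2]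
    simp [Nat.factorial_succ]
    push_cast
    field_simp
    ring
  · rw [Nat.cast_choose ℝ (by omega), e3]
    simp [Nat.factorial_succ]
    push_cast
    field_simp
    ring
  · rw [Nat.cast_choose ℝ (by omega), e3b]
    simp [Nat.factorial_succ]
    push_cast
    field_simp
    ring

lemma Q_formulas {ι : Type*} [DecidableEq ι] (s : Finset ι) (x : ι → ℝ) :
    (∀ n < s.card, Q n s x = 0) ∧
    Q s.card s x = (-1 : ℝ)^s.card * (s.card.factorial : ℝ) * ∏ j ∈ s, x j ∧
    Q (s.card+1) s x
      = (-1 : ℝ)^s.card * ((s.card+1).factorial : ℝ) / 2 * (∏ j ∈ s, x j) * (∑ j ∈ s, x j) ∧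
    Q (s.card+2) s x = (-1 : ℝ)^s.card * ((s.card+2).factorial : ℝ) * (∏ j ∈ s, x j) *
      (3 * (∑ j ∈ s, x j)^2 + ∑ j ∈ s, x j ^ 2) / 24 := by
  induction s using Finset.induction_on with
  | empty => simp [Q]
  | insert a s ha ih =>
    obtain ⟨ih0, ihc, ihc1, ihc2⟩ := ih
    set c := s.card with hc
    have hcard : (insert a s).card = c + 1 := Finset.card_insert_of_notMem ha
    have hvanish : ∀ n ≤ c, ∑ k ∈ Finset.range n, (n.choose k : ℝ) * x a ^ (n - k) * Q k s x = 0 :=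
      fun n hn => Finset.sum_eq_zero fun k hk => by
        rw [ih0 k (lt_of_lt_of_le (Finset.mem_range.1 hk) hn)]; ring
    have hvan : ∀ n : ℕ, ∑ k ∈ Finset.range c, (n.choose k : ℝ) * x a ^ (n - k) * Q k s x = 0 :=
      fun n => Finset.sum_eq_zero fun k hk => by
        rw [ih0 k (Finset.mem_range.1 hk)]; ring
    have h0 : ∀ n < c + 1, Q n (insert a s) x = 0 := by
      intro n hn
      rw [Q_insert ha, hvanish n (by omega), neg_zero]
    have hprod : ∏ j ∈ insert a s, x j = x a * ∏ j ∈ s, x j := Finset.prod_insert ha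
    have hsum : ∑ j ∈ insert a s, x j = x a + ∑ j ∈ s, x j := Finset.sum_insert ha
    have hsum2 : ∑ j ∈ insert a s, x j ^ 2 = x a ^ 2 + ∑ j ∈ s, x j ^ 2 := Finset.sum_insert ha
    have hfac : ∀ k : ℕ, ((k+1).factorial : ℝ) = (k+1) * k.factorial := by
      intro k; rw [Nat.factorial_succ]; push_cast; ring
    obtain ⟨b2, b3, b3b⟩ := choose_casts c
    -- n = c+1
    have H1 : Q (c+1) (insert a s) x
        = (-1 : ℝ)^(c+1) * ((c+1).factorial : ℝ) * ∏ j ∈ insert a s, x j := by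
      rw [Q_insert ha, Finset.sum_range_succ, hvan (c+1), zero_add,
        Nat.choose_succ_self_right, ihc, hprod]
      have : c + 1 - c = 1 := by omega
      rw [this, hfac c]
      push_cast
      ring
    -- n = c+2
    have H2 : Q (c+2) (insert a s) x
        = (-1 : ℝ)^(c+1) * ((c+2).factorial : ℝ) / 2 * (∏ j ∈ insert a s, x j)
          * (∑ j ∈ insert a s, x j) := by
      rw [Q_insert ha]
      rw [show c + 2 = (c+1) + 1 from rfl, Finset.sum_range_succ, Finset.sum_range_succ,
        hvan (c+1+1), zero_add]
      rw [ihc, ihc1, Nat.choose_succ_self_right, b2, hprod, hsum]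
      have e1 : c + 1 + 1 - c = 2 := by omega
      have e2 : c + 1 + 1 - (c + 1) = 1 := by omega
      rw [e1, e2, hfac (c+1), hfac c]
      push_cast
      ring
    -- n = c+3
    have H3 : Q (c+3) (insert a s) x
        = (-1 : ℝ)^(c+1) * ((c+3).factorial : ℝ) * (∏ j ∈ insert a s, x j)
          * (3 * (∑ j ∈ insert a s, x j)^2 + ∑ j ∈ insert a s, x j ^ 2) / 24 := by
      rw [Q_insert ha]
      rw [show c + 3 = (c+2) + 1 from rfl, show c + 2 = (c+1) + 1 from rfl,
        Finset.sum_range_succ, Finset.sum_range_succ, Finset.sum_range_succ,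
        hvan (c+1+1+1), zero_add]
      rw [ihc, ihc1, ihc2, Nat.choose_succ_self_right]
      have e1 : c + 1 + 1 + 1 - c = 3 := by omega
      have e2 : c + 1 + 1 + 1 - (c + 1) = 2 := by omega
      have e3 : c + 1 + 1 + 1 - (c + 1 + 1) = 1 := by omega
      rw [e1, e2, e3, hprod, hsum, hsum2]
      rw [show ((c+1+1+1).choose c : ℝ) = ((c+3).choose c : ℝ) from by norm_num,
        show ((c+1+1+1).choose (c+1) : ℝ) = ((c+3).choose (c+1) : ℝ) from by norm_num,
        b3, b3b]
      rw [show (c+1+1+1).factorial = (c+3).factorial from by norm_num,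
        show ((c+3).factorial : ℝ) = (c+3)*(c+2)*(c+1)*c.factorial from by
          rw [show c+3 = (c+2)+1 from rfl, hfac, show c+2 = (c+1)+1 from rfl, hfac, hfac]
          push_cast; ring,
        show ((c+2).factorial : ℝ) = (c+2)*(c+1)*c.factorial from by
          rw [show c+2 = (c+1)+1 from rfl, hfac, hfac]; push_cast; ring,
        hfac c]
      push_cast
      ring
    rw [hcard]
    exact ⟨h0, H1, by rw [show c+1+1 = c+2 from rfl]; exact H2,
      by rw [show c+1+2 = c+3 from rfl]; exact H3⟩

theorem stmt_10 (m : ℕ) (x : Fin m → ℝ) :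
    P m (m + 2) x =
      (-1 : ℝ) ^ (m + 1) * ((m + 2).factorial : ℝ) / 2 * (∏ j, x j) *
        ((3 * (∑ j, x j) ^ 2 + ∑ j, (x j) ^ 2) / 12) := by
  have hPQ : P m (m + 2) x = - Q (m + 2) (Finset.univ : Finset (Fin m)) x := by
    rw [Q, ← Finset.sum_filter_add_sum_filter_not _ Finset.Nonempty]
    have h2 : ∑ S ∈ (Finset.univ : Finset (Fin m)).powerset.filter (fun S => ¬ S.Nonempty),
        (-1 : ℝ) ^ S.card * (∑ j ∈ S, x j) ^ (m + 2) = 0 := by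
      refine Finset.sum_eq_zero fun S hS => ?_
      have : S = ∅ := Finset.not_nonempty_iff_eq_empty.1 (Finset.mem_filter.1 hS).2
      subst this
      simp
    rw [h2, add_zero, P, ← Finset.sum_neg_distrib]
    refine Finset.sum_congr rfl fun S _ => ?_
    rw [pow_succ]
    ring
  have h := (Q_formulas (Finset.univ : Finset (Fin m)) x).2.2.2
  rw [Finset.card_fin] at h
  rw [hPQ, h, pow_succ]
  ring
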